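/- Let H be a symmetric n×n real matrix, ε > 0, and g ∈ ℝⁿ. Suppose d ∈ ℝⁿ is a nonzero vector with dᵀ(H + 2εI)d < ε‖d‖², and define d' = −sgn(dᵀg)·(|dᵀHd|/‖d‖²)·(d/‖d‖). Then d'ᵀg ≤ 0, and d'ᵀHd'/‖d'‖² = −‖d'‖ ≤ −ε. -/

import Mathlib

open RealInnerProductSpace

/-- The sign function, with the convention `sgn 0 = 1`. -/
noncomputable def sgn (t : ℝ) : ℝ := if t < 0 then -1 else 1

lemma sgn_mul_self_eq_abs (t : ℝ) : sgn t * t = |t| := by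
  unfold sgn
  split_ifs with h
  · rw [abs_of_neg h]; ring
  · rw [abs_of_nonneg (le_of_not_gt h)]; ring

lemma abs_sgn (t : ℝ) : |sgn t| = 1 := by
  unfold sgn; split_ifs <;> simp

/-- Properties of the rescaled negative-curvature step (d_type = NC) used by
the damped Newton-CG algorithm: `d'ᵀg ≤ 0` and
`d'ᵀHd'/‖d'‖² = −‖d'‖ ≤ −ε`. -/
theorem stmt14
    {n : ℕ} (H : EuclideanSpace ℝ (Fin n) →L[ℝ] EuclideanSpace ℝ (Fin n))
    (hsym : ∀ x y : EuclideanSpace ℝ (Fin n), ⟪H x, y⟫ = ⟪x, H y⟫)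
    (ε : ℝ) (hε : 0 < ε)
    (g d d' : EuclideanSpace ℝ (Fin n)) (hd : d ≠ 0)
    (hcurv : ⟪d, H d + (2*ε) • d⟫ < ε * ‖d‖^2)
    (hd' : d' = (-(sgn ⟪d, g⟫) * (|⟪d, H d⟫| / ‖d‖^2) * ‖d‖⁻¹) • d) :
    ⟪d', g⟫ ≤ 0 ∧ ⟪d', H d'⟫ / ‖d'‖^2 = -‖d'‖ ∧ -‖d'‖ ≤ -ε := by
  have hdn : (0:ℝ) < ‖d‖ := norm_pos_iff.mpr hd
  set t : ℝ := ⟪d, g⟫ with ht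
  set q : ℝ := ⟪d, H d⟫ with hqdef
  have hexp : ⟪d, H d + (2*ε) • d⟫ = q + (2*ε) * ‖d‖^2 := by
    rw [inner_add_right, real_inner_smul_right, real_inner_self_eq_norm_sq]
  have hq : q < -(ε * ‖d‖^2) := by
    rw [hexp] at hcurv; nlinarith
  have hqneg : q < 0 := by nlinarith [sq_nonneg ‖d‖]
  have habs : |q| = -q := abs_of_neg hqneg
  set a : ℝ := |q| / ‖d‖^2 with hadef
  have ha : ε < a := by
    rw [hadef, habs, lt_div_iff₀ (by positivity)]; nlinarith
  have hapos : 0 < a := lt_trans hε ha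
  set c : ℝ := -(sgn t) * a * ‖d‖⁻¹ with hcdef
  have hd'c : d' = c • d := hd'
  have hcabs : |c| = a * ‖d‖⁻¹ := by
    rw [hcdef, abs_mul, abs_mul, abs_neg, abs_sgn, one_mul,
      abs_of_pos hapos, abs_of_pos (inv_pos.mpr hdn)]
  have hnorm : ‖d'‖ = a := by
    rw [hd'c, norm_smul, Real.norm_eq_abs, hcabs]
    field_simp
  have hig : ⟪d', g⟫ = c * t := by rw [hd'c, real_inner_smul_left]
  have hiH : ⟪d', H d'⟫ = c^2 * q := by
    rw [hd'c, map_smul, real_inner_smul_left, real_inner_smul_right]; ring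
  have hst : 0 ≤ sgn t * t := by rw [sgn_mul_self_eq_abs]; exact abs_nonneg t
  refine ⟨?_, ?_, ?_⟩
  · rw [hig, hcdef]
    have : -(sgn t) * a * ‖d‖⁻¹ * t = -((sgn t * t) * (a * ‖d‖⁻¹)) := by ring
    rw [this]
    have : 0 ≤ (sgn t * t) * (a * ‖d‖⁻¹) := by positivity
    linarith
  · rw [hiH, hnorm, hcdef]
    have hs2 : (sgn t)^2 = 1 := by
      have := abs_sgn t
      nlinarith [sq_abs (sgn t)]
    have hqa : q = -(a * ‖d‖^2) := by
      rw [hadef, habs]; field_simp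
    have hc2 : (-(sgn t) * a * ‖d‖⁻¹)^2 = a^2 / ‖d‖^2 := by
      have h1 : (-(sgn t) * a * ‖d‖⁻¹)^2 = (sgn t)^2 * (a^2 * (‖d‖⁻¹)^2) := by ring
      rw [h1, hs2, one_mul]; field_simp
    rw [hc2, hqa]
    field_simp
  · rw [hnorm]; linarith
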